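/- Value-iteration convergence: suppose α ∈ (0,1). Let V₀ : ℝⁿ → ℝ be any bounded function and define recursively V_{i+1}(x) = max( α · sup_{d ∈ D} V_i(f(x,d)), max_{1 ≤ j ≤ n₀} g_j(x) ) for all x ∈ ℝⁿ and i ∈ ℕ. Then the sequence (V_i) converges uniformly on ℝⁿ to the value function V; that is, for every ε > 0 there exists N ∈ ℕ such that |V_i(x) − V(x)| ≤ ε for all i ≥ N and all x ∈ ℝⁿ. -/

import Mathlib

/-- Trajectory of the discrete-time system `f` from initial state `x`
under input policy `π` : `φ_x^π(0) = x`, `φ_x^π(l+1) = f(φ_x^π(l), π(l))`. -/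
noncomputable def traj {n m : ℕ} (f : (Fin n → ℝ) → (Fin m → ℝ) → (Fin n → ℝ))
    (x : Fin n → ℝ) (π : ℕ → Fin m → ℝ) : ℕ → Fin n → ℝ
  | 0 => x
  | l + 1 => f (traj f x π l) (π l)

/-- Value function `V(x) = sup_{π, l, j} α^l · g_j(φ_x^π(l))`, where the
supremum ranges over input policies `π` (sequences taking values in `D`),
times `l ∈ ℕ` and indices `j ∈ {1,…,n₀}`. -/
noncomputable def valueFun {n m n₀ : ℕ} (f : (Fin n → ℝ) → (Fin m → ℝ) → (Fin n → ℝ))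
    (D : Set (Fin m → ℝ)) (g : Fin n₀ → (Fin n → ℝ) → ℝ) (α : ℝ)
    (x : Fin n → ℝ) : ℝ :=
  sSup {v : ℝ | ∃ π : ℕ → Fin m → ℝ, (∀ i, π i ∈ D) ∧
    ∃ l : ℕ, ∃ j : Fin n₀, v = α ^ l * g j (traj f x π l)}

theorem traj_shift {n m : ℕ} (f : (Fin n → ℝ) → (Fin m → ℝ) → (Fin n → ℝ))
    (x : Fin n → ℝ) (π : ℕ → Fin m → ℝ) (l : ℕ) :
    traj f x π (l + 1) = traj f (f x (π 0)) (fun k => π (k + 1)) l := by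
  induction l with
  | zero => rfl
  | succ l ih =>
    show f (traj f x π (l + 1)) (π (l + 1)) = _
    rw [ih]
    rfl

/-- value-iteration convergence: for `α ∈ (0,1)`, if `V₀` is any
bounded function and `V_{i+1}(x) = max( α · sup_{d ∈ D} V_i(f(x,d)),
max_{1 ≤ j ≤ n₀} g_j(x) )`, then `(V_i)` converges uniformly on `ℝⁿ` to the
value function `V`. -/
theorem value_iteration_uniform_convergence {n m n₀ : ℕ} (hn₀ : 1 ≤ n₀)
    (f : (Fin n → ℝ) → (Fin m → ℝ) → (Fin n → ℝ))
    (D : Set (Fin m → ℝ)) (hD : D.Nonempty)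
    (g : Fin n₀ → (Fin n → ℝ) → ℝ)
    (hg : ∀ (j : Fin n₀) (x : Fin n → ℝ), -1 < g j x ∧ g j x < 1)
    (α : ℝ) (hα : α ∈ Set.Ioo (0 : ℝ) 1)
    (VI : ℕ → (Fin n → ℝ) → ℝ)
    (hV0bdd : ∃ C : ℝ, ∀ x : Fin n → ℝ, |VI 0 x| ≤ C)
    (hrec : ∀ (i : ℕ) (x : Fin n → ℝ),
      VI (i + 1) x = max (α * sSup {v : ℝ | ∃ d ∈ D, v = VI i (f x d)})
        (⨆ j : Fin n₀, g j x)) :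
    ∀ ε > (0 : ℝ), ∃ N : ℕ, ∀ i ≥ N, ∀ x : Fin n → ℝ,
      |VI i x - valueFun f D g α x| ≤ ε := by
  obtain ⟨C, hC⟩ := hV0bdd
  obtain ⟨hα0, hα1⟩ := hα
  obtain ⟨d₀, hd₀⟩ := hD
  have j0 : Fin n₀ := ⟨0, hn₀⟩
  haveI : Nonempty (Fin n₀) := ⟨j0⟩
  have hCnn : 0 ≤ C := le_trans (abs_nonneg _) (hC (fun _ => 0))
  set S : (Fin n → ℝ) → Set ℝ := fun x =>
    {v : ℝ | ∃ π : ℕ → Fin m → ℝ, (∀ i, π i ∈ D) ∧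
      ∃ l : ℕ, ∃ j : Fin n₀, v = α ^ l * g j (traj f x π l)} with hS
  have hVeq : ∀ x, valueFun f D g α x = sSup (S x) := fun _ => rfl
  have hSne : ∀ x, (S x).Nonempty := fun x =>
    ⟨g j0 x, fun _ => d₀, fun _ => hd₀, 0, j0, by simp [traj]⟩
  have hSub : ∀ x, ∀ v ∈ S x, v ≤ 1 := by
    rintro x v ⟨π, hπ, l, j, rfl⟩
    calc α ^ l * g j (traj f x π l) ≤ α ^ l * 1 :=
          mul_le_mul_of_nonneg_left (hg j (traj f x π l)).2.le (pow_nonneg hα0.le l)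
      _ ≤ 1 := by rw [mul_one]; exact pow_le_one₀ hα0.le hα1.le
  have hSbdd : ∀ x, BddAbove (S x) := fun x => ⟨1, fun v hv => hSub x v hv⟩
  have hVle1 : ∀ x, valueFun f D g α x ≤ 1 := fun x => csSup_le (hSne x) (hSub x)
  have hVlb : ∀ x, ∀ j : Fin n₀, g j x ≤ valueFun f D g α x := fun x j =>
    le_csSup (hSbdd x) ⟨fun _ => d₀, fun _ => hd₀, 0, j, by simp [traj]⟩
  have hVneg1 : ∀ x, -1 ≤ valueFun f D g α x := fun x =>
    le_trans (hg j0 x).1.le (hVlb x j0)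
  -- α · V(f x d) ≤ V x for every d ∈ D
  have hBell : ∀ x, ∀ d ∈ D, α * valueFun f D g α (f x d) ≤ valueFun f D g α x := by
    intro x d hd
    rw [hVeq, hVeq, mul_comm, ← le_div_iff₀ hα0]
    apply csSup_le (hSne _)
    rintro v ⟨π, hπ, l, j, rfl⟩
    rw [le_div_iff₀ hα0]
    have hmem : α ^ (l + 1) * g j (traj f x (fun k => Nat.casesOn k d (fun k' => π k')) (l + 1))
        ∈ S x := by
      exact ⟨fun k => Nat.casesOn k d (fun k' => π k'), fun i => by cases i with
        | zero => exact hd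
        | succ i => exact hπ i, l + 1, j, rfl⟩
    have hsh : traj f x (fun k => Nat.casesOn k d (fun k' => π k')) (l + 1)
        = traj f (f x d) π l := by
      rw [traj_shift]; rfl
    have := le_csSup (hSbdd x) hmem
    rw [hsh] at this
    calc α ^ l * g j (traj f (f x d) π l) * α = α ^ (l + 1) * g j (traj f (f x d) π l) := by
          ring
      _ ≤ sSup (S x) := this
  -- main induction
  have key : ∀ i, ∀ x, |VI i x - valueFun f D g α x| ≤ α ^ i * (C + 1) := by
    intro i
    induction i with
    | zero =>
      intro x
      rw [abs_sub_le_iff]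
      have h1 := abs_le.mp (hC x)
      have h2 := hVneg1 x
      have h3 := hVle1 x
      constructor
      · simp only [pow_zero, one_mul]; linarith [h1.2]
      · simp only [pow_zero, one_mul]; linarith [h1.1]
    | succ i ih =>
      intro x
      set T : Set ℝ := {v : ℝ | ∃ d ∈ D, v = VI i (f x d)} with hT
      have hTne : T.Nonempty := ⟨VI i (f x d₀), d₀, hd₀, rfl⟩
      have hTbdd : BddAbove T := by
        refine ⟨1 + α ^ i * (C + 1), ?_⟩
        rintro v ⟨d, hd, rfl⟩
        have h1 := (abs_le.mp (ih (f x d))).2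
        have h2 := hVle1 (f x d)
        linarith
      have hsupg : (⨆ j : Fin n₀, g j x) ≤ valueFun f D g α x := ciSup_le (hVlb x)
      have hpow : (0:ℝ) < α ^ (i + 1) * (C + 1) :=
        mul_pos (pow_pos hα0 _) (by linarith)
      rw [abs_sub_le_iff]
      constructor
      · -- VI (i+1) x - V x ≤ α^{i+1}(C+1)
        rw [hrec i x]
        have hsT : α * sSup T ≤ valueFun f D g α x + α ^ (i + 1) * (C + 1) := by
          rw [mul_comm, ← le_div_iff₀ hα0]
          apply csSup_le hTne
          rintro v ⟨d, hd, rfl⟩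
          rw [le_div_iff₀ hα0]
          have h1 := (abs_le.mp (ih (f x d))).2
          have h2 := hBell x d hd
          nlinarith [pow_pos hα0 i, pow_succ α i]
        have : max (α * sSup T) (⨆ j : Fin n₀, g j x)
            ≤ valueFun f D g α x + α ^ (i + 1) * (C + 1) :=
          max_le hsT (by linarith)
        linarith
      · -- V x - VI (i+1) x ≤ α^{i+1}(C+1)
        rw [hrec i x]
        have hmain : valueFun f D g α x
            ≤ max (α * sSup T + α ^ (i + 1) * (C + 1)) (⨆ j : Fin n₀, g j x) := by
          rw [hVeq]
          apply csSup_le (hSne x)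
          rintro v ⟨π, hπ, l, j, rfl⟩
          cases l with
          | zero =>
            apply le_max_of_le_right
            simp only [pow_zero, one_mul]
            show g j x ≤ _
            exact le_ciSup (Set.Finite.bddAbove (Set.finite_range (fun j => g j x))) j
          | succ l =>
            apply le_max_of_le_left
            have hsh := traj_shift f x π l
            have hmem : α ^ l * g j (traj f (f x (π 0)) (fun k => π (k + 1)) l)
                ∈ S (f x (π 0)) :=
              ⟨fun k => π (k + 1), fun i => hπ _, l, j, rfl⟩
            have h1 := le_csSup (hSbdd (f x (π 0))) hmem
            have h2 := (abs_le.mp (ih (f x (π 0)))).1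
            have h3 : VI i (f x (π 0)) ≤ sSup T := le_csSup hTbdd ⟨π 0, hπ 0, rfl⟩
            rw [← hVeq] at h1
            have h4 : α ^ l * g j (traj f (f x (π 0)) (fun k => π (k + 1)) l)
                ≤ sSup T + α ^ i * (C + 1) := by linarith
            calc α ^ (l + 1) * g j (traj f x π (l + 1))
                = α * (α ^ l * g j (traj f (f x (π 0)) (fun k => π (k + 1)) l)) := by
                  rw [hsh]; ring
              _ ≤ α * (sSup T + α ^ i * (C + 1)) :=
                  mul_le_mul_of_nonneg_left h4 hα0.le
              _ = α * sSup T + α ^ (i + 1) * (C + 1) := by ring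
        have : max (α * sSup T + α ^ (i + 1) * (C + 1)) (⨆ j : Fin n₀, g j x)
            ≤ max (α * sSup T) (⨆ j : Fin n₀, g j x) + α ^ (i + 1) * (C + 1) := by
          apply max_le
          · exact add_le_add (le_max_left _ _) le_rfl
          · linarith [le_max_right (α * sSup T) (⨆ j : Fin n₀, g j x)]
        linarith
  -- conclude
  intro ε hε
  have hCpos : (0:ℝ) < C + 1 := by linarith
  have htend : Filter.Tendsto (fun i : ℕ => α ^ i) Filter.atTop (nhds 0) :=
    tendsto_pow_atTop_nhds_zero_of_lt_one hα0.le hα1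
  obtain ⟨N, hN⟩ := Filter.eventually_atTop.mp
    (htend.eventually (gt_mem_nhds (div_pos hε hCpos)))
  refine ⟨N, fun i hi x => ?_⟩
  have h1 := key i x
  have h2 : α ^ i < ε / (C + 1) := hN i hi
  have h3 : α ^ i * (C + 1) < ε := (lt_div_iff₀ hCpos).mp h2
  linarith
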